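/- For n ≥ 3, the subspace ℍ_ε^⊥ of A_{n+1} is a left module over ℍ_ε ≅ ℍ under the action u·α := αu (the algebra product), i.e. for all u, v ∈ ℍ_ε and α ∈ ℍ_ε^⊥ one has e₀·α = α, u·α ∈ ℍ_ε^⊥, and u·(v·α) = (uv)·α (equivalently (αv)u = α(uv)). Moreover, the restriction of this action to the unit sphere S³ = S(ℍ_ε) is a group action on ℍ_ε^⊥ that is smooth, orthogonal (each u ∈ S(ℍ_ε) acts as a linear isometry), and free of fixed points on nonzero vectors (αu = α with α ≠ 0 forces u = e₀). -/

import Mathlib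

noncomputable section

/-- The Cayley–Dickson algebra `A n` of dimension `2^n` over `ℝ`:
`A 0 = ℝ` and `A (n+1) = A n × A n`. -/
def CD : ℕ → Type
  | 0 => ℝ
  | n + 1 => CD n × CD n

namespace CD

instance instAddCommGroup : (n : ℕ) → AddCommGroup (CD n)
  | 0 => inferInstanceAs (AddCommGroup ℝ)
  | n + 1 =>
    letI := instAddCommGroup n
    inferInstanceAs (AddCommGroup (CD n × CD n))

instance instModule : (n : ℕ) → Module ℝ (CD n)
  | 0 => inferInstanceAs (Module ℝ ℝ)
  | n + 1 =>
    letI := instAddCommGroup n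
    letI := instModule n
    inferInstanceAs (Module ℝ (CD n × CD n))

/-- Conjugation: `x̄ = x` on `ℝ` and `(x₁,x₂)‾ = (x̄₁, -x₂)`. -/
protected def conj : {n : ℕ} → CD n → CD n
  | 0, x => x
  | _ + 1, x => (CD.conj x.1, -x.2)

/-- Cayley–Dickson multiplication: `(a,b)(x,y) = (ax - ȳb, ya + bx̄)`. -/
protected def mul : {n : ℕ} → CD n → CD n → CD n
  | 0, x, y => (show ℝ from x) * (show ℝ from y)
  | _ + 1, x, y =>
    (CD.mul x.1 y.1 - CD.mul (CD.conj y.2) x.2,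
     CD.mul y.2 x.1 + CD.mul x.2 (CD.conj y.1))

instance instMul (n : ℕ) : Mul (CD n) := ⟨CD.mul⟩

/-- The multiplicative unit `e₀` of `A n`. -/
def e0 : (n : ℕ) → CD n
  | 0 => (1 : ℝ)
  | n + 1 => (e0 n, 0)

/-- The element `ẽ₀ = (0, e₀)` of `A n` (junk value `0` for `n = 0`). -/
def te0 : (n : ℕ) → CD n
  | 0 => 0
  | n + 1 => (0, e0 n)

/-- The "complexification" `α̃ = (-b, a)` of `α = (a,b)` (junk value `0` for `n = 0`);
note `α̃ = α·ẽ₀`. -/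
def tilde : {n : ℕ} → CD n → CD n
  | 0, _ => 0
  | _ + 1, x => (-x.2, x.1)

/-- The standard inner product on `A n ≅ ℝ^{2^n}`. -/
protected def inner : {n : ℕ} → CD n → CD n → ℝ
  | 0, x, y => (show ℝ from x) * (show ℝ from y)
  | _ + 1, x, y => CD.inner x.1 y.1 + CD.inner x.2 y.2

/-- The euclidean norm on `A n`. -/
protected def norm {n : ℕ} (x : CD n) : ℝ := Real.sqrt (CD.inner x x)

/-- `x` is pure if its trace `t(x) = x + x̄` vanishes. -/
def IsPure {n : ℕ} (x : CD n) : Prop := x + CD.conj x = 0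

/-- `x = (a,b)` is doubly pure if both `a` and `b` are pure
(equivalently, both `x` and `x̃` are pure). -/
def IsDoublyPure : {n : ℕ} → CD n → Prop
  | 0, x => x = 0
  | _ + 1, x => IsPure x.1 ∧ IsPure x.2

/-- The associator `(x,y,z) = (xy)z - x(yz)`. -/
def assoc {n : ℕ} (x y z : CD n) : CD n := (x * y) * z - x * (y * z)

/-- The subspace `ℍ_a`: the real span of `{e₀, ã, a, ẽ₀}`. -/
def Ha {n : ℕ} (a : CD n) : Submodule ℝ (CD n) :=
  Submodule.span ℝ {e0 n, tilde a, a, te0 n}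

/-- The orthogonal complement `ℍ_a^⊥` of `ℍ_a` in `A n`. -/
def HaPerp {n : ℕ} (a : CD n) : Set (CD n) :=
  {x | ∀ y ∈ Ha a, CD.inner x y = 0}

/-- The element `ε = (ẽ₀, 0)` of `A (n+1)`. -/
def eps (n : ℕ) : CD (n + 1) := (te0 n, 0)

/-- `α̂ = (b,a)` for `α = (a,b) ∈ A (n+1)`. -/
def hat {n : ℕ} (x : CD (n + 1)) : CD (n + 1) := (x.2, x.1)

/-- The element `(a, b)` of `A (n+1) = A n × A n`. -/
def pair {n : ℕ} (a b : CD n) : CD (n + 1) := (a, b)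

end CD

namespace CD
variable {n : ℕ}

lemma mul_def (x y : CD (n+1)) : x * y =
    (x.1 * y.1 - CD.conj y.2 * x.2, y.2 * x.1 + x.2 * CD.conj y.1) := rfl

lemma conj_def (x : CD (n+1)) : CD.conj x = (CD.conj x.1, -x.2) := rfl

lemma inner_def (x y : CD (n+1)) : CD.inner x y = CD.inner x.1 y.1 + CD.inner x.2 y.2 := rfl

lemma add_def (x y : CD (n+1)) : x + y = (x.1 + y.1, x.2 + y.2) := rfl
lemma neg_def (x : CD (n+1)) : -x = (-x.1, -x.2) := rfl
lemma smul_def (r : ℝ) (x : CD (n+1)) : r • x = (r • x.1, r • x.2) := rfl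
lemma zero_def : (0 : CD (n+1)) = ((0 : CD n), (0 : CD n)) := rfl

lemma mul_def0 (x y : CD 0) : x * y = (show ℝ from x) * (show ℝ from y) := rfl
lemma conj_def0 (x : CD 0) : CD.conj x = x := rfl
lemma inner_def0 (x y : CD 0) : CD.inner x y = (show ℝ from x) * (show ℝ from y) := rfl
end CD
namespace CD
variable {n : ℕ}

-- conj lemmas
lemma conj_add : ∀ {n : ℕ} (x y : CD n), CD.conj (x + y) = CD.conj x + CD.conj y
  | 0, x, y => rfl
  | n + 1, x, y => by
    erw [add_def, conj_def, conj_def, conj_def, add_def]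
    exact Prod.ext (conj_add x.1 y.1) (neg_add _ _)

lemma conj_neg : ∀ {n : ℕ} (x : CD n), CD.conj (-x) = -CD.conj x
  | 0, x => rfl
  | n + 1, x => by
    erw [neg_def, conj_def, conj_def, neg_def]
    exact Prod.ext (conj_neg x.1) (by simp)

lemma conj_zero : ∀ {n : ℕ}, CD.conj (0 : CD n) = 0
  | 0 => rfl
  | n + 1 => by erw [zero_def, conj_def]; exact Prod.ext conj_zero (by simp)

lemma conj_conj : ∀ {n : ℕ} (x : CD n), CD.conj (CD.conj x) = x
  | 0, x => rfl
  | n + 1, x => by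
    rw [conj_def, conj_def]
    exact Prod.ext (conj_conj x.1) (by simp)

lemma conj_smul : ∀ {n : ℕ} (r : ℝ) (x : CD n), CD.conj (r • x) = r • CD.conj x
  | 0, r, x => rfl
  | n + 1, r, x => by
    erw [smul_def, conj_def, conj_def, smul_def]
    exact Prod.ext (conj_smul r x.1) (by simp)

lemma conj_e0 : ∀ {n : ℕ}, CD.conj (e0 n) = e0 n
  | 0 => rfl
  | n + 1 => by erw [e0, conj_def]; exact Prod.ext conj_e0 (by simp [zero_def])

end CD
namespace CD
variable {n : ℕ}

mutual
lemma zero_mul' : ∀ {n : ℕ} (x : CD n), (0 : CD n) * x = 0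
  | 0, x => show (0:ℝ) * (show ℝ from x) = (0:ℝ) from zero_mul _
  | n + 1, x => by
    refine Prod.ext ?_ ?_
    · show (0 : CD n) * x.1 - CD.conj x.2 * 0 = 0
      rw [zero_mul', mul_zero', sub_zero]
    · show x.2 * (0 : CD n) + (0 : CD n) * CD.conj x.1 = 0
      rw [zero_mul', mul_zero', add_zero]

lemma mul_zero' : ∀ {n : ℕ} (x : CD n), x * (0 : CD n) = 0
  | 0, x => show (show ℝ from x) * (0:ℝ) = (0:ℝ) from mul_zero _
  | n + 1, x => by
    refine Prod.ext ?_ ?_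
    · show x.1 * (0 : CD n) - CD.conj 0 * x.2 = 0
      rw [conj_zero, zero_mul', mul_zero', sub_zero]
    · show (0 : CD n) * x.1 + x.2 * CD.conj 0 = 0
      rw [conj_zero, zero_mul', mul_zero', add_zero]
end

mutual
lemma add_mul' : ∀ {n : ℕ} (x y z : CD n), (x + y) * z = x * z + y * z
  | 0, x, y, z => show ((show ℝ from x) + (show ℝ from y)) * (show ℝ from z) = (show ℝ from x) * (show ℝ from z) + (show ℝ from y) * (show ℝ from z) from add_mul _ _ _
  | n + 1, x, y, z => by
    refine Prod.ext ?_ ?_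
    · show (x.1 + y.1) * z.1 - CD.conj z.2 * (x.2 + y.2) =
        (x.1 * z.1 - CD.conj z.2 * x.2) + (y.1 * z.1 - CD.conj z.2 * y.2)
      rw [add_mul', mul_add']; abel
    · show z.2 * (x.1 + y.1) + (x.2 + y.2) * CD.conj z.1 =
        (z.2 * x.1 + x.2 * CD.conj z.1) + (z.2 * y.1 + y.2 * CD.conj z.1)
      rw [add_mul', mul_add']; abel

lemma mul_add' : ∀ {n : ℕ} (x y z : CD n), x * (y + z) = x * y + x * z
  | 0, x, y, z => show (show ℝ from x) * ((show ℝ from y) + (show ℝ from z)) = (show ℝ from x) * (show ℝ from y) + (show ℝ from x) * (show ℝ from z) from mul_add _ _ _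
  | n + 1, x, y, z => by
    refine Prod.ext ?_ ?_
    · show x.1 * (y.1 + z.1) - CD.conj (y.2 + z.2) * x.2 =
        (x.1 * y.1 - CD.conj y.2 * x.2) + (x.1 * z.1 - CD.conj z.2 * x.2)
      rw [mul_add', conj_add, add_mul']; abel
    · show (y.2 + z.2) * x.1 + x.2 * CD.conj (y.1 + z.1) =
        (y.2 * x.1 + x.2 * CD.conj y.1) + (z.2 * x.1 + x.2 * CD.conj z.1)
      rw [add_mul', conj_add, mul_add']; abel
end

mutual
lemma neg_mul' : ∀ {n : ℕ} (x y : CD n), (-x) * y = -(x * y)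
  | 0, x, y => show (-(show ℝ from x)) * (show ℝ from y) = -((show ℝ from x) * (show ℝ from y)) from neg_mul _ _
  | n + 1, x, y => by
    refine Prod.ext ?_ ?_
    · show (-x.1) * y.1 - CD.conj y.2 * (-x.2) = -(x.1 * y.1 - CD.conj y.2 * x.2)
      rw [neg_mul', mul_neg']; abel
    · show y.2 * (-x.1) + (-x.2) * CD.conj y.1 = -(y.2 * x.1 + x.2 * CD.conj y.1)
      rw [neg_mul', mul_neg']; abel

lemma mul_neg' : ∀ {n : ℕ} (x y : CD n), x * (-y) = -(x * y)
  | 0, x, y => show (show ℝ from x) * (-(show ℝ from y)) = -((show ℝ from x) * (show ℝ from y)) from mul_neg _ _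
  | n + 1, x, y => by
    refine Prod.ext ?_ ?_
    · show x.1 * (-y.1) - CD.conj (-y.2) * x.2 = -(x.1 * y.1 - CD.conj y.2 * x.2)
      rw [mul_neg', conj_neg, neg_mul']; abel
    · show (-y.2) * x.1 + x.2 * CD.conj (-y.1) = -(y.2 * x.1 + x.2 * CD.conj y.1)
      rw [neg_mul', conj_neg, mul_neg']; abel
end

mutual
lemma smul_mul' : ∀ {n : ℕ} (r : ℝ) (x y : CD n), (r • x) * y = r • (x * y)
  | 0, r, x, y => show (r • (show ℝ from x)) * (show ℝ from y) = r • ((show ℝ from x) * (show ℝ from y)) from smul_mul_assoc r _ _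
  | n + 1, r, x, y => by
    refine Prod.ext ?_ ?_
    · show (r • x.1) * y.1 - CD.conj y.2 * (r • x.2) =
        r • (x.1 * y.1 - CD.conj y.2 * x.2)
      rw [smul_mul', mul_smul'', smul_sub]
    · show y.2 * (r • x.1) + (r • x.2) * CD.conj y.1 =
        r • (y.2 * x.1 + x.2 * CD.conj y.1)
      rw [smul_mul', mul_smul'', smul_add]

lemma mul_smul'' : ∀ {n : ℕ} (r : ℝ) (x y : CD n), x * (r • y) = r • (x * y)
  | 0, r, x, y => show (show ℝ from x) * (r • (show ℝ from y)) = r • ((show ℝ from x) * (show ℝ from y)) from mul_smul_comm r _ _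
  | n + 1, r, x, y => by
    refine Prod.ext ?_ ?_
    · show x.1 * (r • y.1) - CD.conj (r • y.2) * x.2 =
        r • (x.1 * y.1 - CD.conj y.2 * x.2)
      rw [mul_smul'', conj_smul, smul_mul', smul_sub]
    · show (r • y.2) * x.1 + x.2 * CD.conj (r • y.1) =
        r • (y.2 * x.1 + x.2 * CD.conj y.1)
      rw [smul_mul', conj_smul, mul_smul'', smul_add]
end

lemma mul_e0' : ∀ {n : ℕ} (x : CD n), x * e0 n = x
  | 0, x => show (show ℝ from x) * (1:ℝ) = x from mul_one _
  | n + 1, x => by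
    refine Prod.ext ?_ ?_
    · show x.1 * e0 n - CD.conj 0 * x.2 = x.1
      rw [conj_zero, zero_mul', mul_e0', sub_zero]
    · show (0 : CD n) * x.1 + x.2 * CD.conj (e0 n) = x.2
      rw [conj_e0, zero_mul', mul_e0', zero_add]

lemma e0_mul' : ∀ {n : ℕ} (x : CD n), e0 n * x = x
  | 0, x => show (1:ℝ) * (show ℝ from x) = x from one_mul _
  | n + 1, x => by
    refine Prod.ext ?_ ?_
    · show e0 n * x.1 - CD.conj x.2 * 0 = x.1
      rw [mul_zero', e0_mul', sub_zero]
    · show x.2 * e0 n + (0 : CD n) * CD.conj x.1 = x.2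
      rw [zero_mul', mul_e0', add_zero]

end CD
namespace CD
variable {n : ℕ}

lemma inner_add_left : ∀ {n : ℕ} (x y z : CD n), CD.inner (x + y) z = CD.inner x z + CD.inner y z
  | 0, x, y, z => show ((show ℝ from x) + (show ℝ from y)) * (show ℝ from z) = _ + _ from add_mul _ _ _
  | n + 1, x, y, z => by
    show CD.inner (x.1 + y.1) z.1 + CD.inner (x.2 + y.2) z.2 =
      (CD.inner x.1 z.1 + CD.inner x.2 z.2) + (CD.inner y.1 z.1 + CD.inner y.2 z.2)
    rw [inner_add_left, inner_add_left]; ring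

lemma inner_add_right : ∀ {n : ℕ} (x y z : CD n), CD.inner x (y + z) = CD.inner x y + CD.inner x z
  | 0, x, y, z => show (show ℝ from x) * ((show ℝ from y) + (show ℝ from z)) = _ + _ from mul_add _ _ _
  | n + 1, x, y, z => by
    show CD.inner x.1 (y.1 + z.1) + CD.inner x.2 (y.2 + z.2) =
      (CD.inner x.1 y.1 + CD.inner x.2 y.2) + (CD.inner x.1 z.1 + CD.inner x.2 z.2)
    rw [inner_add_right, inner_add_right]; ring

lemma inner_smul_left : ∀ {n : ℕ} (r : ℝ) (x y : CD n), CD.inner (r • x) y = r * CD.inner x y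
  | 0, r, x, y => show (r • (show ℝ from x)) * (show ℝ from y) = r * ((show ℝ from x) * (show ℝ from y)) by
      rw [smul_eq_mul, mul_assoc]
  | n + 1, r, x, y => by
    show CD.inner (r • x.1) y.1 + CD.inner (r • x.2) y.2 =
      r * (CD.inner x.1 y.1 + CD.inner x.2 y.2)
    rw [inner_smul_left, inner_smul_left]; ring

lemma inner_smul_right : ∀ {n : ℕ} (r : ℝ) (x y : CD n), CD.inner x (r • y) = r * CD.inner x y
  | 0, r, x, y => show (show ℝ from x) * (r • (show ℝ from y)) = r * ((show ℝ from x) * (show ℝ from y)) by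
      rw [smul_eq_mul]; ring
  | n + 1, r, x, y => by
    show CD.inner x.1 (r • y.1) + CD.inner x.2 (r • y.2) =
      r * (CD.inner x.1 y.1 + CD.inner x.2 y.2)
    rw [inner_smul_right, inner_smul_right]; ring

lemma inner_neg_left : ∀ {n : ℕ} (x y : CD n), CD.inner (-x) y = -CD.inner x y
  | 0, x, y => show (-(show ℝ from x)) * (show ℝ from y) = _ from neg_mul _ _
  | n + 1, x, y => by
    show CD.inner (-x.1) y.1 + CD.inner (-x.2) y.2 = -(CD.inner x.1 y.1 + CD.inner x.2 y.2)
    rw [inner_neg_left, inner_neg_left]; ring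

lemma inner_neg_right : ∀ {n : ℕ} (x y : CD n), CD.inner x (-y) = -CD.inner x y
  | 0, x, y => show (show ℝ from x) * (-(show ℝ from y)) = _ from mul_neg _ _
  | n + 1, x, y => by
    show CD.inner x.1 (-y.1) + CD.inner x.2 (-y.2) = -(CD.inner x.1 y.1 + CD.inner x.2 y.2)
    rw [inner_neg_right, inner_neg_right]; ring

lemma inner_zero_left : ∀ {n : ℕ} (y : CD n), CD.inner (0 : CD n) y = 0
  | 0, y => show (0:ℝ) * (show ℝ from y) = 0 from zero_mul _
  | n + 1, y => by
    show CD.inner (0 : CD n) y.1 + CD.inner (0 : CD n) y.2 = 0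
    rw [inner_zero_left, inner_zero_left, add_zero]

lemma inner_zero_right : ∀ {n : ℕ} (y : CD n), CD.inner y (0 : CD n) = 0
  | 0, y => show (show ℝ from y) * (0:ℝ) = 0 from mul_zero _
  | n + 1, y => by
    show CD.inner y.1 (0 : CD n) + CD.inner y.2 (0 : CD n) = 0
    rw [inner_zero_right, inner_zero_right, add_zero]

lemma inner_comm' : ∀ {n : ℕ} (x y : CD n), CD.inner x y = CD.inner y x
  | 0, x, y => show (show ℝ from x) * (show ℝ from y) = (show ℝ from y) * (show ℝ from x) from mul_comm _ _
  | n + 1, x, y => by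
    show CD.inner x.1 y.1 + CD.inner x.2 y.2 = CD.inner y.1 x.1 + CD.inner y.2 x.2
    rw [inner_comm' x.1, inner_comm' x.2]

lemma inner_self_nonneg : ∀ {n : ℕ} (x : CD n), 0 ≤ CD.inner x x
  | 0, x => mul_self_nonneg (show ℝ from x)
  | n + 1, x => add_nonneg (inner_self_nonneg x.1) (inner_self_nonneg x.2)

lemma inner_self_eq_zero : ∀ {n : ℕ} (x : CD n), CD.inner x x = 0 → x = 0
  | 0, x, h => by
    have : (show ℝ from x) * (show ℝ from x) = 0 := h
    have := mul_self_eq_zero.mp this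
    exact this
  | n + 1, x, h => by
    have h1 : CD.inner x.1 x.1 + CD.inner x.2 x.2 = 0 := h
    have e1 : CD.inner x.1 x.1 = 0 :=
      le_antisymm (by nlinarith [inner_self_nonneg x.2]) (inner_self_nonneg x.1)
    have e2 : CD.inner x.2 x.2 = 0 := by nlinarith [inner_self_nonneg x.1]
    exact Prod.ext (inner_self_eq_zero x.1 e1) (inner_self_eq_zero x.2 e2)

lemma inner_e0_e0 : ∀ {n : ℕ}, CD.inner (e0 n) (e0 n) = 1
  | 0 => show (1:ℝ) * 1 = 1 from one_mul 1
  | n + 1 => by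
    show CD.inner (e0 n) (e0 n) + CD.inner (0 : CD n) (0 : CD n) = 1
    rw [inner_e0_e0, inner_zero_left, add_zero]

end CD
namespace CD
variable {n : ℕ}

mutual
/-- ⟨xy, z⟩ = ⟨y, x̄ z⟩ -/
lemma adjA : ∀ {n : ℕ} (x y z : CD n), CD.inner (x * y) z = CD.inner y (CD.conj x * z)
  | 0, x, y, z => show ((show ℝ from x) * (show ℝ from y)) * (show ℝ from z)
      = (show ℝ from y) * ((show ℝ from x) * (show ℝ from z)) by ring
  | n + 1, x, y, z => by
    show CD.inner (x.1 * y.1 - CD.conj y.2 * x.2) z.1 +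
         CD.inner (y.2 * x.1 + x.2 * CD.conj y.1) z.2 =
         CD.inner y.1 (CD.conj x.1 * z.1 - CD.conj z.2 * (-x.2)) +
         CD.inner y.2 (z.2 * CD.conj x.1 + (-x.2) * CD.conj z.1)
    have hA := adjA x.1 y.1 z.1
    have hB : CD.inner (CD.conj y.2 * x.2) z.1 = CD.inner x.2 (y.2 * z.1) := by
      rw [adjA, conj_conj]
    have hH : CD.inner y.2 (x.2 * CD.conj z.1) = CD.inner x.2 (y.2 * z.1) := by
      rw [inner_comm', adjB, conj_conj]
    have hF : CD.inner y.1 (CD.conj z.2 * x.2) = CD.inner x.2 (z.2 * y.1) := by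
      rw [inner_comm', adjA, conj_conj]
    have hD : CD.inner (x.2 * CD.conj y.1) z.2 = CD.inner x.2 (z.2 * y.1) := by
      rw [adjB, conj_conj]
    have hC : CD.inner (y.2 * x.1) z.2 = CD.inner y.2 (z.2 * CD.conj x.1) := adjB _ _ _
    simp only [sub_eq_add_neg, mul_neg', neg_mul', neg_neg, inner_add_left, inner_add_right,
      inner_neg_left, inner_neg_right]
    linarith [hA, hB, hC, hD, hF, hH]

/-- ⟨xy, z⟩ = ⟨x, z ȳ⟩ -/
lemma adjB : ∀ {n : ℕ} (x y z : CD n), CD.inner (x * y) z = CD.inner x (z * CD.conj y)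
  | 0, x, y, z => show ((show ℝ from x) * (show ℝ from y)) * (show ℝ from z)
      = (show ℝ from x) * ((show ℝ from z) * (show ℝ from y)) by ring
  | n + 1, x, y, z => by
    show CD.inner (x.1 * y.1 - CD.conj y.2 * x.2) z.1 +
         CD.inner (y.2 * x.1 + x.2 * CD.conj y.1) z.2 =
         CD.inner x.1 (z.1 * CD.conj y.1 - CD.conj (-y.2) * z.2) +
         CD.inner x.2 ((-y.2) * z.1 + z.2 * CD.conj (CD.conj y.1))
    have hA := adjB x.1 y.1 z.1
    have hB : CD.inner (CD.conj y.2 * x.2) z.1 = CD.inner x.2 (y.2 * z.1) := by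
      rw [adjA, conj_conj]
    have hC : CD.inner (y.2 * x.1) z.2 = CD.inner x.1 (CD.conj y.2 * z.2) := by
      rw [adjA]
    have hD : CD.inner (x.2 * CD.conj y.1) z.2 = CD.inner x.2 (z.2 * y.1) := by
      rw [adjB, conj_conj]
    simp only [conj_conj, conj_neg, sub_eq_add_neg, mul_neg', neg_mul', neg_neg,
      inner_add_left, inner_add_right, inner_neg_left, inner_neg_right]
    linarith [hA, hB, hC, hD]
end

/-- trace: x + x̄ = 2⟨x,e₀⟩ • e₀ -/
lemma trace_eq : ∀ {n : ℕ} (x : CD n), x + CD.conj x = (2 * CD.inner x (e0 n)) • e0 n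
  | 0, x => show (show ℝ from x) + (show ℝ from x)
      = (2 * ((show ℝ from x) * (1:ℝ))) • (1:ℝ) by rw [smul_eq_mul]; ring
  | n + 1, x => by
    refine Prod.ext ?_ ?_
    · show x.1 + CD.conj x.1 = (2 * (CD.inner x.1 (e0 n) + CD.inner x.2 (0 : CD n))) • e0 n
      rw [inner_zero_right, add_zero, trace_eq]
    · show x.2 + -x.2 = (2 * (CD.inner x.1 (e0 n) + CD.inner x.2 (0 : CD n))) • (0 : CD n)
      rw [add_neg_cancel, smul_zero]

mutual
lemma conj_mul_self : ∀ {n : ℕ} (x : CD n), CD.conj x * x = CD.inner x x • e0 n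
  | 0, x => show (show ℝ from x) * (show ℝ from x)
      = ((show ℝ from x) * (show ℝ from x)) • (1:ℝ) by rw [smul_eq_mul, mul_one]
  | n + 1, x => by
    refine Prod.ext ?_ ?_
    · show CD.conj x.1 * x.1 - CD.conj x.2 * (-x.2) =
        (CD.inner x.1 x.1 + CD.inner x.2 x.2) • e0 n
      rw [mul_neg', sub_neg_eq_add, conj_mul_self, conj_mul_self, ← add_smul]
    · show x.2 * CD.conj x.1 + (-x.2) * CD.conj x.1 =
        (CD.inner x.1 x.1 + CD.inner x.2 x.2) • (0 : CD n)
      rw [neg_mul', add_neg_cancel, smul_zero]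

lemma mul_conj_self : ∀ {n : ℕ} (x : CD n), x * CD.conj x = CD.inner x x • e0 n
  | 0, x => show (show ℝ from x) * (show ℝ from x)
      = ((show ℝ from x) * (show ℝ from x)) • (1:ℝ) by rw [smul_eq_mul, mul_one]
  | n + 1, x => by
    refine Prod.ext ?_ ?_
    · show x.1 * CD.conj x.1 - CD.conj (-x.2) * x.2 =
        (CD.inner x.1 x.1 + CD.inner x.2 x.2) • e0 n
      rw [conj_neg, neg_mul', sub_neg_eq_add, mul_conj_self, conj_mul_self, ← add_smul]
    · show (-x.2) * x.1 + x.2 * CD.conj (CD.conj x.1) =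
        (CD.inner x.1 x.1 + CD.inner x.2 x.2) • (0 : CD n)
      rw [conj_conj, neg_mul', neg_add_cancel, smul_zero]
end

end CD
namespace CD
variable {m : ℕ}

lemma conj_te0 : CD.conj (te0 (m+1)) = -(te0 (m+1)) := by
  refine Prod.ext ?_ ?_
  · show CD.conj (0 : CD m) = -(0 : CD m); rw [conj_zero, neg_zero]
  · rfl

lemma mul_te0 (x : CD (m+1)) : x * te0 (m+1) = (-x.2, x.1) := by
  refine Prod.ext ?_ ?_
  · show x.1 * (0 : CD m) - CD.conj (e0 m) * x.2 = -x.2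
    rw [mul_zero', conj_e0, e0_mul', zero_sub]
  · show e0 m * x.1 + x.2 * CD.conj (0 : CD m) = x.1
    rw [e0_mul', conj_zero, mul_zero', add_zero]

lemma te0_mul (x : CD (m+1)) : te0 (m+1) * x = (-CD.conj x.2, CD.conj x.1) := by
  refine Prod.ext ?_ ?_
  · show (0 : CD m) * x.1 - CD.conj x.2 * e0 m = -CD.conj x.2
    rw [zero_mul', mul_e0', zero_sub]
  · show x.2 * (0 : CD m) + e0 m * CD.conj x.1 = CD.conj x.1
    rw [mul_zero', e0_mul', zero_add]

section pureLemmas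
variable (c : CD (m+1))

lemma te0_mul_pure (h1 : CD.conj c.1 = -c.1) (h2 : CD.conj c.2 = -c.2) :
    te0 (m+1) * c = (c.2, -c.1) := by
  rw [te0_mul, h1, h2, neg_neg]

lemma mul_te0_te0 : (c * te0 (m+1)) * te0 (m+1) = -c := by
  rw [mul_te0, mul_te0]
  rfl

lemma te0_mul_mul_te0 (h1 : CD.conj c.1 = -c.1) (h2 : CD.conj c.2 = -c.2) :
    te0 (m+1) * (c * te0 (m+1)) = c := by
  erw [mul_te0, te0_mul]
  show ((-CD.conj c.1 : CD m), CD.conj (-c.2)) = c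
  rw [h1, neg_neg, conj_neg, h2, neg_neg]
  rfl

lemma te0_mul_te0_mul : te0 (m+1) * (te0 (m+1) * c) = -c := by
  rw [te0_mul, te0_mul]
  show ((-CD.conj (CD.conj c.1) : CD m), CD.conj (-CD.conj c.2)) = -c
  rw [conj_conj, conj_neg, conj_conj]
  rfl

lemma te0_mul_mul_te0' (h1 : CD.conj c.1 = -c.1) (h2 : CD.conj c.2 = -c.2) :
    (te0 (m+1) * c) * te0 (m+1) = c := by
  erw [te0_mul, mul_te0]
  show ((-CD.conj c.1 : CD m), -CD.conj c.2) = c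
  rw [h1, h2, neg_neg, neg_neg]
  rfl

end pureLemmas

-- generators at level m+2
lemma tilde_eps : tilde (eps (m+1)) = ((0 : CD (m+1)), te0 (m+1)) := by
  refine Prod.ext ?_ ?_
  · show (-(0 : CD (m+1))) = 0; rw [neg_zero]
  · rfl

-- multiplication table; E := e0 (m+1+1), I := eps (m+1), J := tilde (eps (m+1)), K := te0 (m+1+1)
lemma mulI (α : CD (m+1+1)) : α * eps (m+1) = (α.1 * te0 (m+1), -(α.2 * te0 (m+1))) := by
  refine Prod.ext ?_ ?_
  · show α.1 * te0 (m+1) - CD.conj (0 : CD (m+1)) * α.2 = _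
    rw [conj_zero, zero_mul', sub_zero]
  · show (0 : CD (m+1)) * α.1 + α.2 * CD.conj (te0 (m+1)) = _
    rw [zero_mul', conj_te0, mul_neg', zero_add]

lemma mulJ (α : CD (m+1+1)) : α * tilde (eps (m+1)) =
    (te0 (m+1) * α.2, te0 (m+1) * α.1) := by
  rw [tilde_eps]
  refine Prod.ext ?_ ?_
  · show α.1 * (0 : CD (m+1)) - CD.conj (te0 (m+1)) * α.2 = _
    rw [mul_zero', conj_te0, neg_mul', sub_neg_eq_add, zero_add]
  · show te0 (m+1) * α.1 + α.2 * CD.conj (0 : CD (m+1)) = _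
    rw [conj_zero, mul_zero', add_zero]

lemma mulK (α : CD (m+1+1)) : α * te0 (m+1+1) = (-α.2, α.1) := mul_te0 α

end CD
namespace CD
variable {m : ℕ}

lemma te0_sq : te0 (m+1) * te0 (m+1) = -(e0 (m+1)) := by
  rw [mul_te0]
  refine Prod.ext rfl ?_
  show (0 : CD m) = -(0 : CD m)
  rw [neg_zero]

section table
-- abbreviations
local notation "t" => te0 (m+1)
local notation "e" => e0 (m+1)

lemma tblII : eps (m+1) * eps (m+1) = -(e0 (m+1+1)) := by
  refine Prod.ext ?_ ?_
  · show t * t - CD.conj (0 : CD (m+1)) * (0 : CD (m+1)) = -e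
    rw [conj_zero, zero_mul', sub_zero, te0_sq]
  · show (0 : CD (m+1)) * t + (0 : CD (m+1)) * CD.conj t = -(0 : CD (m+1))
    rw [zero_mul', zero_mul', add_zero, neg_zero]

lemma tblIJ : eps (m+1) * tilde (eps (m+1)) = -(te0 (m+1+1)) := by
  rw [tilde_eps]
  refine Prod.ext ?_ ?_
  · show t * (0 : CD (m+1)) - CD.conj t * (0 : CD (m+1)) = -(0 : CD (m+1))
    rw [mul_zero', mul_zero', sub_zero, neg_zero]
  · show t * t + (0 : CD (m+1)) * CD.conj (0 : CD (m+1)) = -e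
    rw [zero_mul', add_zero, te0_sq]

lemma tblIK : eps (m+1) * te0 (m+1+1) = tilde (eps (m+1)) := by
  rw [tilde_eps]
  refine Prod.ext ?_ ?_
  · show t * (0 : CD (m+1)) - CD.conj e * (0 : CD (m+1)) = (0 : CD (m+1))
    rw [mul_zero', mul_zero', sub_zero]
  · show e * t + (0 : CD (m+1)) * CD.conj (0 : CD (m+1)) = t
    rw [e0_mul', zero_mul', add_zero]

lemma tblJI : tilde (eps (m+1)) * eps (m+1) = te0 (m+1+1) := by
  rw [tilde_eps]
  refine Prod.ext ?_ ?_
  · show (0 : CD (m+1)) * t - CD.conj (0 : CD (m+1)) * t = (0 : CD (m+1))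
    rw [conj_zero, zero_mul', sub_zero]
  · show (0 : CD (m+1)) * (0 : CD (m+1)) + t * CD.conj t = e
    rw [zero_mul', conj_te0, mul_neg', te0_sq, neg_neg, zero_add]

lemma tblJJ : tilde (eps (m+1)) * tilde (eps (m+1)) = -(e0 (m+1+1)) := by
  rw [tilde_eps]
  refine Prod.ext ?_ ?_
  · show (0 : CD (m+1)) * (0 : CD (m+1)) - CD.conj t * t = -e
    rw [zero_mul', conj_te0, neg_mul', te0_sq, neg_neg, zero_sub]
  · show t * (0 : CD (m+1)) + t * CD.conj (0 : CD (m+1)) = -(0 : CD (m+1))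
    rw [conj_zero, mul_zero', add_zero, neg_zero]

lemma tblJK : tilde (eps (m+1)) * te0 (m+1+1) = -(eps (m+1)) := by
  rw [tilde_eps]
  refine Prod.ext ?_ ?_
  · show (0 : CD (m+1)) * (0 : CD (m+1)) - CD.conj e * t = -t
    rw [zero_mul', conj_e0, e0_mul', zero_sub]
  · show e * (0 : CD (m+1)) + t * CD.conj (0 : CD (m+1)) = -(0 : CD (m+1))
    rw [conj_zero, mul_zero', mul_zero', add_zero, neg_zero]

lemma tblKI : te0 (m+1+1) * eps (m+1) = -(tilde (eps (m+1))) := by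
  rw [tilde_eps]
  refine Prod.ext ?_ ?_
  · show (0 : CD (m+1)) * t - CD.conj (0 : CD (m+1)) * e = -(0 : CD (m+1))
    rw [conj_zero, zero_mul', zero_mul', sub_zero, neg_zero]
  · show (0 : CD (m+1)) * (0 : CD (m+1)) + e * CD.conj t = -t
    rw [zero_mul', conj_te0, mul_neg', e0_mul', zero_add]

lemma tblKJ : te0 (m+1+1) * tilde (eps (m+1)) = eps (m+1) := by
  rw [tilde_eps]
  refine Prod.ext ?_ ?_
  · show (0 : CD (m+1)) * (0 : CD (m+1)) - CD.conj t * e = t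
    rw [zero_mul', conj_te0, neg_mul', mul_e0', sub_neg_eq_add, zero_add]
  · show t * (0 : CD (m+1)) + e * CD.conj (0 : CD (m+1)) = (0 : CD (m+1))
    rw [conj_zero, mul_zero', mul_zero', add_zero]

lemma tblKK : te0 (m+1+1) * te0 (m+1+1) = -(e0 (m+1+1)) := te0_sq

end table
end CD
namespace CD

def lmulL {N : ℕ} (α : CD N) : CD N →ₗ[ℝ] CD N where
  toFun := fun u => α * u
  map_add' := mul_add' α
  map_smul' := fun r u => mul_smul'' r α u

@[simp] lemma lmulL_apply {N : ℕ} (α u : CD N) : lmulL α u = α * u := rfl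

def rmulL {N : ℕ} (u : CD N) : CD N →ₗ[ℝ] CD N where
  toFun := fun α => α * u
  map_add' := fun x y => add_mul' x y u
  map_smul' := fun r x => smul_mul' r x u

@[simp] lemma rmulL_apply {N : ℕ} (u α : CD N) : rmulL u α = α * u := rfl

def innerRL {N : ℕ} (w : CD N) : CD N →ₗ[ℝ] ℝ where
  toFun := fun y => CD.inner w y
  map_add' := fun x y => inner_add_right w x y
  map_smul' := fun r x => inner_smul_right r w x

@[simp] lemma innerRL_apply {N : ℕ} (w y : CD N) : innerRL w y = CD.inner w y := rfl

def innerLL {N : ℕ} (g : CD N) : CD N →ₗ[ℝ] ℝ where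
  toFun := fun w => CD.inner w g
  map_add' := fun x y => inner_add_left x y g
  map_smul' := fun r x => inner_smul_left r x g

@[simp] lemma innerLL_apply {N : ℕ} (g w : CD N) : innerLL g w = CD.inner w g := rfl

lemma memE {N : ℕ} : e0 (N+1) ∈ Ha (eps N) :=
  Submodule.subset_span (by simp)

lemma memJ {N : ℕ} : tilde (eps N) ∈ Ha (eps N) :=
  Submodule.subset_span (by simp)

lemma memI {N : ℕ} : eps N ∈ Ha (eps N) :=
  Submodule.subset_span (by simp)

lemma memK {N : ℕ} : te0 (N+1) ∈ Ha (eps N) :=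
  Submodule.subset_span (by simp)

lemma ha_ind {N : ℕ} {M : Type} [AddCommGroup M] [Module ℝ M] (f : CD (N+1) →ₗ[ℝ] M)
    (h1 : f (e0 (N+1)) = 0) (h2 : f (tilde (eps N)) = 0) (h3 : f (eps N) = 0)
    (h4 : f (te0 (N+1)) = 0) : ∀ u ∈ Ha (eps N), f u = 0 := by
  intro u hu
  have hle : Ha (eps N) ≤ LinearMap.ker f := by
    refine Submodule.span_le.mpr ?_
    intro y hy
    simp only [Set.mem_insert_iff, Set.mem_singleton_iff] at hy
    rcases hy with rfl | rfl | rfl | rfl <;>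
      simp [LinearMap.mem_ker, h1, h2, h3, h4]
  exact LinearMap.mem_ker.mp (hle hu)

lemma conj_mem_Ha {m : ℕ} {u : CD (m+1+1)} (hu : u ∈ Ha (eps (m+1))) :
    CD.conj u ∈ Ha (eps (m+1)) := by
  induction hu using Submodule.span_induction with
  | mem x h =>
    simp only [Set.mem_insert_iff, Set.mem_singleton_iff] at h
    rcases h with rfl | rfl | rfl | rfl
    · rw [conj_e0]; exact memE
    · have : CD.conj (tilde (eps (m+1))) = -(tilde (eps (m+1))) := by
        rw [tilde_eps]
        exact Prod.ext (conj_zero.trans neg_zero.symm) rfl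
      rw [this]; exact neg_mem memJ
    · have : CD.conj (eps (m+1)) = -(eps (m+1)) := Prod.ext conj_te0 rfl
      rw [this]; exact neg_mem memI
    · rw [conj_te0]; exact neg_mem memK
  | zero => rw [conj_zero]; exact zero_mem _
  | add x y _ _ hx hy => rw [conj_add]; exact add_mem hx hy
  | smul r x _ hx => rw [conj_smul]; exact Submodule.smul_mem _ _ hx

lemma te0_mul_pure' {m : ℕ} (c : CD (m+1)) (h1 : CD.conj c.1 = -c.1)
    (h2 : CD.conj c.2 = -c.2) : te0 (m+1) * c = -(c * te0 (m+1)) := by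
  rw [te0_mul_pure c h1 h2, mul_te0]
  exact Prod.ext (neg_neg _).symm rfl

end CD


/-- For `n ≥ 3`, `ℍ_ε^⊥` is a left `ℍ_ε`-module under `u·α := αu`:
`e₀` acts as the identity, the action preserves `ℍ_ε^⊥` and satisfies
`u·(v·α) = (uv)·α`, i.e. `(αv)u = α(uv)`.  Moreover the restriction to the unit
sphere `S³ = S(ℍ_ε)` acts by linear (hence smooth) orthogonal transformations
and is free of fixed points on nonzero vectors. -/
theorem statement14 (n : ℕ) (hn : 3 ≤ n) :
    (∀ α ∈ CD.HaPerp (CD.eps n), α * CD.e0 (n + 1) = α) ∧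
    (∀ u ∈ CD.Ha (CD.eps n), ∀ α ∈ CD.HaPerp (CD.eps n),
      α * u ∈ CD.HaPerp (CD.eps n)) ∧
    (∀ u ∈ CD.Ha (CD.eps n), ∀ v ∈ CD.Ha (CD.eps n),
      ∀ α ∈ CD.HaPerp (CD.eps n), (α * v) * u = α * (u * v)) ∧
    (∀ u : CD (n + 1), ∀ (r : ℝ) (α β : CD (n + 1)),
      (α + β) * u = α * u + β * u ∧ (r • α) * u = r • (α * u)) ∧
    (∀ u ∈ CD.Ha (CD.eps n), CD.norm u = 1 →
      ∀ α ∈ CD.HaPerp (CD.eps n), ∀ β ∈ CD.HaPerp (CD.eps n),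
        CD.inner (α * u) (β * u) = CD.inner α β) ∧
    (∀ u ∈ CD.Ha (CD.eps n), CD.norm u = 1 →
      ∀ α ∈ CD.HaPerp (CD.eps n), α ≠ 0 → α * u = α → u = CD.e0 (n + 1)) := by
  obtain ⟨m, rfl⟩ : ∃ m, n = m + 1 := ⟨n - 1, by omega⟩
  open CD in
  -- orthogonality facts for elements of the perp
  have perp_facts : ∀ α ∈ HaPerp (eps (m+1)),
      CD.inner α.1 (e0 (m+1)) = 0 ∧ CD.inner α.1 (te0 (m+1)) = 0 ∧
      CD.inner α.2 (te0 (m+1)) = 0 ∧ CD.inner α.2 (e0 (m+1)) = 0 := by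
    intro α hα
    have pE := hα _ memE
    have pI := hα _ memI
    have pJ := hα _ memJ
    have pK := hα _ memK
    change CD.inner α.1 (e0 (m+1)) + CD.inner α.2 (0 : CD (m+1)) = 0 at pE
    rw [inner_zero_right, add_zero] at pE
    change CD.inner α.1 (te0 (m+1)) + CD.inner α.2 (0 : CD (m+1)) = 0 at pI
    rw [inner_zero_right, add_zero] at pI
    rw [tilde_eps] at pJ
    change CD.inner α.1 (0 : CD (m+1)) + CD.inner α.2 (te0 (m+1)) = 0 at pJ
    rw [inner_zero_right, zero_add] at pJ
    change CD.inner α.1 (0 : CD (m+1)) + CD.inner α.2 (e0 (m+1)) = 0 at pK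
    rw [inner_zero_right, zero_add] at pK
    exact ⟨pE, pI, pJ, pK⟩
  have pure_of : ∀ c : CD (m+1), CD.inner c (e0 (m+1)) = 0 → CD.inner c (te0 (m+1)) = 0 →
      CD.conj c.1 = -c.1 ∧ CD.conj c.2 = -c.2 := by
    intro c hE hT
    constructor
    · have hc : CD.conj c = -c := by
        have h := trace_eq c
        rw [hE, mul_zero, zero_smul] at h
        exact eq_neg_of_add_eq_zero_right h
      exact congrArg Prod.fst hc
    · have h2 : CD.inner c.2 (e0 m) = 0 := by
        change CD.inner c.1 (0 : CD m) + CD.inner c.2 (e0 m) = 0 at hT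
        rw [inner_zero_right, zero_add] at hT
        exact hT
      have h := trace_eq c.2
      rw [h2, mul_zero, zero_smul] at h
      exact eq_neg_of_add_eq_zero_right h
  -- the key associativity property
  have key : ∀ α ∈ HaPerp (eps (m+1)), ∀ u ∈ Ha (eps (m+1)), ∀ v ∈ Ha (eps (m+1)),
      (α * v) * u = α * (u * v) := by
    intro α hα u hu v hv
    obtain ⟨pE, pI, pJ, pK⟩ := perp_facts α hα
    obtain ⟨ha1, ha2⟩ := pure_of α.1 pE pI
    obtain ⟨hb1, hb2⟩ := pure_of α.2 pK pJ
    have caseE : ∀ u' ∈ Ha (eps (m+1)),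
        (α * e0 (m+1+1)) * u' = α * (u' * e0 (m+1+1)) := by
      intro u' _
      rw [mul_e0', mul_e0']
    have caseI : ∀ u' ∈ Ha (eps (m+1)),
        (α * eps (m+1)) * u' = α * (u' * eps (m+1)) := by
      have hg : ∀ u' ∈ Ha (eps (m+1)),
          (lmulL (α * eps (m+1)) - (lmulL α).comp (rmulL (eps (m+1)))) u' = 0 := by
        refine ha_ind _ ?_ ?_ ?_ ?_
        · simp only [LinearMap.sub_apply, LinearMap.comp_apply, lmulL_apply, rmulL_apply,
            sub_eq_zero]
          rw [mul_e0', e0_mul']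
        · simp only [LinearMap.sub_apply, LinearMap.comp_apply, lmulL_apply, rmulL_apply,
            sub_eq_zero]
          erw [tblJI, mulK α, mulI α, mulJ]
          refine Prod.ext ?_ ?_
          · show te0 (m+1) * (-(α.2 * te0 (m+1))) = -α.2
            rw [mul_neg', te0_mul_mul_te0 α.2 hb1 hb2]
          · show te0 (m+1) * (α.1 * te0 (m+1)) = α.1
            exact te0_mul_mul_te0 α.1 ha1 ha2
        · simp only [LinearMap.sub_apply, LinearMap.comp_apply, lmulL_apply, rmulL_apply,
            sub_eq_zero]
          erw [tblII, mul_neg', mul_e0', mulI α, mulI]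
          refine Prod.ext ?_ ?_
          · show (α.1 * te0 (m+1)) * te0 (m+1) = -α.1
            exact mul_te0_te0 α.1
          · show -(-(α.2 * te0 (m+1)) * te0 (m+1)) = -α.2
            rw [neg_mul', neg_neg, mul_te0_te0]
        · simp only [LinearMap.sub_apply, LinearMap.comp_apply, lmulL_apply, rmulL_apply,
            sub_eq_zero]
          erw [tblKI, mul_neg', mulJ α, mulI α, mulK]
          refine Prod.ext ?_ ?_
          · show -(-(α.2 * te0 (m+1))) = -(te0 (m+1) * α.2)
            rw [te0_mul_pure' α.2 hb1 hb2]
          · show α.1 * te0 (m+1) = -(te0 (m+1) * α.1)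
            rw [te0_mul_pure' α.1 ha1 ha2, neg_neg]
      intro u' hu'
      exact sub_eq_zero.mp (by simpa using hg u' hu')
    have caseJ : ∀ u' ∈ Ha (eps (m+1)),
        (α * tilde (eps (m+1))) * u' = α * (u' * tilde (eps (m+1))) := by
      have hg : ∀ u' ∈ Ha (eps (m+1)),
          (lmulL (α * tilde (eps (m+1))) - (lmulL α).comp (rmulL (tilde (eps (m+1))))) u' = 0 := by
        refine ha_ind _ ?_ ?_ ?_ ?_
        · simp only [LinearMap.sub_apply, LinearMap.comp_apply, lmulL_apply, rmulL_apply,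
            sub_eq_zero]
          rw [mul_e0', e0_mul']
        · simp only [LinearMap.sub_apply, LinearMap.comp_apply, lmulL_apply, rmulL_apply,
            sub_eq_zero]
          erw [tblJJ, mul_neg', mul_e0', mulJ α, mulJ]
          refine Prod.ext ?_ ?_
          · show te0 (m+1) * (te0 (m+1) * α.1) = -α.1
            exact te0_mul_te0_mul α.1
          · show te0 (m+1) * (te0 (m+1) * α.2) = -α.2
            exact te0_mul_te0_mul α.2
        · simp only [LinearMap.sub_apply, LinearMap.comp_apply, lmulL_apply, rmulL_apply,
            sub_eq_zero]
          erw [tblIJ, mul_neg', mulK α, mulJ α, mulI]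
          refine Prod.ext ?_ ?_
          · show (te0 (m+1) * α.2) * te0 (m+1) = -(-α.2)
            rw [te0_mul_mul_te0' α.2 hb1 hb2, neg_neg]
          · show -((te0 (m+1) * α.1) * te0 (m+1)) = -α.1
            rw [te0_mul_mul_te0' α.1 ha1 ha2]
        · simp only [LinearMap.sub_apply, LinearMap.comp_apply, lmulL_apply, rmulL_apply,
            sub_eq_zero]
          erw [tblKJ, mulI α, mulJ α, mulK]
          refine Prod.ext ?_ ?_
          · show -(te0 (m+1) * α.1) = α.1 * te0 (m+1)
            rw [te0_mul_pure' α.1 ha1 ha2, neg_neg]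
          · show te0 (m+1) * α.2 = -(α.2 * te0 (m+1))
            exact te0_mul_pure' α.2 hb1 hb2
      intro u' hu'
      exact sub_eq_zero.mp (by simpa using hg u' hu')
    have caseK : ∀ u' ∈ Ha (eps (m+1)),
        (α * te0 (m+1+1)) * u' = α * (u' * te0 (m+1+1)) := by
      have hg : ∀ u' ∈ Ha (eps (m+1)),
          (lmulL (α * te0 (m+1+1)) - (lmulL α).comp (rmulL (te0 (m+1+1)))) u' = 0 := by
        refine ha_ind _ ?_ ?_ ?_ ?_
        · simp only [LinearMap.sub_apply, LinearMap.comp_apply, lmulL_apply, rmulL_apply,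
            sub_eq_zero]
          rw [mul_e0', e0_mul']
        · simp only [LinearMap.sub_apply, LinearMap.comp_apply, lmulL_apply, rmulL_apply,
            sub_eq_zero]
          erw [tblJK, mul_neg', mulI α, mulK α, mulJ]
          refine Prod.ext ?_ ?_
          · show te0 (m+1) * α.1 = -(α.1 * te0 (m+1))
            exact te0_mul_pure' α.1 ha1 ha2
          · show te0 (m+1) * (-α.2) = -(-(α.2 * te0 (m+1)))
            rw [mul_neg', te0_mul_pure' α.2 hb1 hb2]
        · simp only [LinearMap.sub_apply, LinearMap.comp_apply, lmulL_apply, rmulL_apply,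
            sub_eq_zero]
          erw [tblIK, mulJ α, mulK α, mulI]
          refine Prod.ext ?_ ?_
          · show (-α.2) * te0 (m+1) = te0 (m+1) * α.2
            rw [neg_mul', te0_mul_pure' α.2 hb1 hb2]
          · show -(α.1 * te0 (m+1)) = te0 (m+1) * α.1
            rw [te0_mul_pure' α.1 ha1 ha2]
        · simp only [LinearMap.sub_apply, LinearMap.comp_apply, lmulL_apply, rmulL_apply,
            sub_eq_zero]
          erw [tblKK, mul_neg', mul_e0', mulK α, mulK]
          exact Prod.ext rfl rfl
      intro u' hu'
      exact sub_eq_zero.mp (by simpa using hg u' hu')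
    have hgv : ∀ v' ∈ Ha (eps (m+1)),
        ((rmulL u).comp (lmulL α) - (lmulL α).comp (lmulL u)) v' = 0 := by
      refine ha_ind _ ?_ ?_ ?_ ?_ <;>
        simp only [LinearMap.sub_apply, LinearMap.comp_apply, lmulL_apply, rmulL_apply,
          sub_eq_zero]
      · exact caseE u hu
      · exact caseJ u hu
      · exact caseI u hu
      · exact caseK u hu
    exact sub_eq_zero.mp (by simpa using hgv v hv)
  -- norm-one elements have unit inner square
  have unit_inner : ∀ u : CD (m+1+1), CD.norm u = 1 → CD.inner u u = 1 := by
    intro u hnorm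
    have h0 := inner_self_nonneg u
    have h1 : Real.sqrt (CD.inner u u) = 1 := hnorm
    nlinarith [Real.sq_sqrt h0]
  refine ⟨fun α _ => mul_e0' α, ?_, ?_, fun u r α β => ⟨add_mul' α β u, smul_mul' r α u⟩, ?_, ?_⟩
  · -- part 2: stability of the perp
    intro u hu α hα
    obtain ⟨pE, pI, pJ, pK⟩ := perp_facts α hα
    have c16 : ∀ g : CD (m+1+1),
        CD.inner (α * e0 (m+1+1)) g = CD.inner α g → True := fun _ _ => trivial
    clear c16
    have hcomp : ∀ g : CD (m+1+1),
        (CD.inner (α * e0 (m+1+1)) g = 0 ∧ CD.inner (α * tilde (eps (m+1))) g = 0 ∧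
         CD.inner (α * eps (m+1)) g = 0 ∧ CD.inner (α * te0 (m+1+1)) g = 0) →
        ∀ u' ∈ Ha (eps (m+1)), CD.inner (α * u') g = 0 := by
      intro g hgs u' hu'
      have := ha_ind ((innerLL g).comp (lmulL α))
        (by simpa using hgs.1) (by simpa using hgs.2.1)
        (by simpa using hgs.2.2.1) (by simpa using hgs.2.2.2) u' hu'
      simpa using this
    have hE4 : ∀ u' ∈ Ha (eps (m+1)), CD.inner (α * u') (e0 (m+1+1)) = 0 := by
      refine hcomp _ ⟨?_, ?_, ?_, ?_⟩
      · rw [mul_e0']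
        change CD.inner α.1 (e0 (m+1)) + CD.inner α.2 (0 : CD (m+1)) = 0
        rw [inner_zero_right, add_zero]; exact pE
      · rw [mulJ α]
        change CD.inner (te0 (m+1) * α.2) (e0 (m+1)) +
          CD.inner (te0 (m+1) * α.1) (0 : CD (m+1)) = 0
        rw [inner_zero_right, add_zero, adjA, conj_te0, neg_mul', mul_e0',
          inner_neg_right, pJ, neg_zero]
      · rw [mulI α]
        change CD.inner (α.1 * te0 (m+1)) (e0 (m+1)) +
          CD.inner (-(α.2 * te0 (m+1))) (0 : CD (m+1)) = 0
        rw [inner_zero_right, add_zero, adjB, conj_te0, mul_neg', e0_mul',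
          inner_neg_right, pI, neg_zero]
      · rw [mulK α]
        change CD.inner (-α.2) (e0 (m+1)) + CD.inner α.1 (0 : CD (m+1)) = 0
        rw [inner_zero_right, add_zero, inner_neg_left, pK, neg_zero]
    have hJ4 : ∀ u' ∈ Ha (eps (m+1)), CD.inner (α * u') (tilde (eps (m+1))) = 0 := by
      refine hcomp _ ⟨?_, ?_, ?_, ?_⟩
      · rw [mul_e0', tilde_eps]
        change CD.inner α.1 (0 : CD (m+1)) + CD.inner α.2 (te0 (m+1)) = 0
        rw [inner_zero_right, zero_add]; exact pJ
      · rw [mulJ α, tilde_eps]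
        change CD.inner (te0 (m+1) * α.2) (0 : CD (m+1)) +
          CD.inner (te0 (m+1) * α.1) (te0 (m+1)) = 0
        rw [inner_zero_right, zero_add, adjA, conj_mul_self, inner_smul_right, pE, mul_zero]
      · rw [mulI α, tilde_eps]
        change CD.inner (α.1 * te0 (m+1)) (0 : CD (m+1)) +
          CD.inner (-(α.2 * te0 (m+1))) (te0 (m+1)) = 0
        rw [inner_zero_right, zero_add, inner_neg_left, adjB, mul_conj_self,
          inner_smul_right, pK, mul_zero, neg_zero]
      · rw [mulK α, tilde_eps]
        change CD.inner (-α.2) (0 : CD (m+1)) + CD.inner α.1 (te0 (m+1)) = 0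
        rw [inner_zero_right, zero_add]; exact pI
    have hI4 : ∀ u' ∈ Ha (eps (m+1)), CD.inner (α * u') (eps (m+1)) = 0 := by
      refine hcomp _ ⟨?_, ?_, ?_, ?_⟩
      · rw [mul_e0']
        change CD.inner α.1 (te0 (m+1)) + CD.inner α.2 (0 : CD (m+1)) = 0
        rw [inner_zero_right, add_zero]; exact pI
      · rw [mulJ α]
        change CD.inner (te0 (m+1) * α.2) (te0 (m+1)) +
          CD.inner (te0 (m+1) * α.1) (0 : CD (m+1)) = 0
        rw [inner_zero_right, add_zero, adjA, conj_mul_self, inner_smul_right, pK, mul_zero]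
      · rw [mulI α]
        change CD.inner (α.1 * te0 (m+1)) (te0 (m+1)) +
          CD.inner (-(α.2 * te0 (m+1))) (0 : CD (m+1)) = 0
        rw [inner_zero_right, add_zero, adjB, mul_conj_self, inner_smul_right, pE, mul_zero]
      · rw [mulK α]
        change CD.inner (-α.2) (te0 (m+1)) + CD.inner α.1 (0 : CD (m+1)) = 0
        rw [inner_zero_right, add_zero, inner_neg_left, pJ, neg_zero]
    have hK4 : ∀ u' ∈ Ha (eps (m+1)), CD.inner (α * u') (te0 (m+1+1)) = 0 := by
      refine hcomp _ ⟨?_, ?_, ?_, ?_⟩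
      · rw [mul_e0']
        change CD.inner α.1 (0 : CD (m+1)) + CD.inner α.2 (e0 (m+1)) = 0
        rw [inner_zero_right, zero_add]; exact pK
      · rw [mulJ α]
        change CD.inner (te0 (m+1) * α.2) (0 : CD (m+1)) +
          CD.inner (te0 (m+1) * α.1) (e0 (m+1)) = 0
        rw [inner_zero_right, zero_add, adjA, conj_te0, neg_mul', mul_e0',
          inner_neg_right, pI, neg_zero]
      · rw [mulI α]
        change CD.inner (α.1 * te0 (m+1)) (0 : CD (m+1)) +
          CD.inner (-(α.2 * te0 (m+1))) (e0 (m+1)) = 0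
        rw [inner_zero_right, zero_add, inner_neg_left, adjB, conj_te0, mul_neg', e0_mul',
          inner_neg_right, pJ, neg_neg]
      · rw [mulK α]
        change CD.inner (-α.2) (0 : CD (m+1)) + CD.inner α.1 (e0 (m+1)) = 0
        rw [inner_zero_right, zero_add]; exact pE
    intro y hy
    have := ha_ind (innerRL (α * u)) (by simpa using hE4 u hu) (by simpa using hJ4 u hu)
      (by simpa using hI4 u hu) (by simpa using hK4 u hu) y hy
    simpa using this
  · -- part 3
    intro u hu v hv α hα
    exact key α hα u hu v hv
  · -- part 5: isometry
    intro u hu hnorm α hα β hβ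
    have huu := unit_inner u hnorm
    have hcu := conj_mem_Ha hu
    have hk := key β hβ (CD.conj u) hcu u hu
    rw [adjB, hk, conj_mul_self, huu, one_smul, mul_e0']
  · -- part 6: freeness
    intro u hu hnorm α hα hne heq
    have huu := unit_inner u hnorm
    have hαα : CD.inner α α ≠ 0 := fun h => hne (inner_self_eq_zero α h)
    have h1 : CD.inner (α * u) α = CD.inner α α := by rw [heq]
    rw [adjA, conj_mul_self, inner_smul_right] at h1
    have hue : CD.inner u (e0 (m+1+1)) = 1 :=
      mul_left_cancel₀ hαα (h1.trans (mul_one _).symm)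
    have hz : CD.inner (u - e0 (m+1+1)) (u - e0 (m+1+1)) = 0 := by
      simp only [sub_eq_add_neg, inner_add_left, inner_add_right, inner_neg_left,
        inner_neg_right, neg_neg]
      rw [huu, hue, inner_e0_e0, inner_comm' (e0 (m+1+1)) u, hue]
      ring
    have h0 := inner_self_eq_zero _ hz
    exact sub_eq_zero.mp h0
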